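/- For an election with n voters, the candidates with the highest Maximin score are exactly the candidates with the lowest insertion score. -/

import Mathlib

/-- Number of voters preferring `a` to `b`. -/
noncomputable def countPref {V C : Type*} [Fintype V] (O : V → C → C → Prop) (a b : C) : ℕ :=
  Nat.card {i : V // O i a b}

/-- `c` is a Condorcet winner: a strict majority of voters prefers `c` to every other candidate. -/
def IsCondorcetWinner {V C : Type*} [Fintype V] (O : V → C → C → Prop) (c : C) : Prop :=
  ∀ b : C, b ≠ c → Fintype.card V < 2 * countPref O c b

open Classical in
lemma countPref_le_card {V C : Type*} [Fintype V] (O : V → C → C → Prop) (a b : C) :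
    countPref O a b ≤ Fintype.card V := by
  classical
  unfold countPref
  rw [Nat.card_eq_fintype_card]
  exact Fintype.card_subtype_le _

lemma countPref_sum {V W C : Type*} [Fintype V] [Fintype W]
    (O : V → C → C → Prop) (O' : W → C → C → Prop) (a b : C) :
    countPref (Sum.elim O O') a b = countPref O a b + countPref O' a b := by
  unfold countPref
  rw [← Nat.card_sum]
  exact Nat.card_congr (Equiv.subtypeSum (p := fun i => Sum.elim O O' i a b))

lemma countPref_add_swap {V C : Type*} [Fintype V]
    (O : V → C → C → Prop) (hO : ∀ i, IsStrictTotalOrder C (O i)) {a b : C} (hab : a ≠ b) :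
    countPref O a b + countPref O b a = Fintype.card V := by
  classical
  unfold countPref
  rw [Nat.card_eq_fintype_card, Nat.card_eq_fintype_card]
  have h : ∀ i : V, O i b a ↔ ¬ O i a b := by
    intro i
    rcases @trichotomous _ (O i) (hO i).toTrichotomous a b with h1 | h1 | h1
    · exact ⟨fun h2 => absurd ((hO i).trans _ _ _ h1 h2) ((hO i).irrefl a), fun h2 => absurd h1 h2⟩
    · exact absurd h1 hab
    · exact ⟨fun _ h2 => (hO i).irrefl a ((hO i).trans _ _ _ h2 h1),
        fun _ => h1⟩
  rw [Fintype.card_congr (Equiv.subtypeEquivRight h), add_comm,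
    Fintype.card_subtype_compl, Nat.sub_add_cancel (Fintype.card_subtype_le _)]

/-- The order placing `c` first. -/
def topOrder {C : Type*} (e : C → ℕ) (c : C) (a b : C) : Prop :=
  b ≠ c ∧ (a = c ∨ e a < e b)

lemma topOrder_sto {C : Type*} (e : C → ℕ) (he : Function.Injective e) (c : C) :
    IsStrictTotalOrder C (topOrder e c) := by
  refine { trichotomous := ?_, irrefl := ?_, trans := ?_ }
  · intro a b
    suffices H : topOrder e c a b ∨ a = b ∨ topOrder e c b a by
      intro h1 h2; rcases H with H | H | H; exacts [absurd H h1, H, absurd H h2]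
    by_cases hab : a = b
    · exact Or.inr (Or.inl hab)
    by_cases hac : a = c
    · exact Or.inl ⟨fun h => hab (hac.trans h.symm), Or.inl hac⟩
    by_cases hbc : b = c
    · refine Or.inr (Or.inr ⟨hac, Or.inl hbc⟩)
    rcases lt_trichotomy (e a) (e b) with h | h | h
    · exact Or.inl ⟨hbc, Or.inr h⟩
    · exact absurd (he h) hab
    · exact Or.inr (Or.inr ⟨hac, Or.inr h⟩)
  · intro a ⟨h1, h2⟩
    rcases h2 with h2 | h2
    · exact h1 h2
    · exact lt_irrefl _ h2
  · intro x y z ⟨h1, h2⟩ ⟨h3, h4⟩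
    refine ⟨h3, ?_⟩
    rcases h2 with h2 | h2
    · exact Or.inl h2
    rcases h4 with h4 | h4
    · exact absurd h4 h1
    · exact Or.inr (h2.trans h4)

lemma countPref_topOrder {C : Type*} {k : ℕ} (e : C → ℕ) (c b : C) (hbc : b ≠ c) :
    countPref (fun _ : Fin k => topOrder e c) c b = k := by
  unfold countPref
  rw [Nat.card_congr (Equiv.subtypeUnivEquiv fun i => ⟨hbc, Or.inl rfl⟩), Nat.card_eq_fintype_card,
    Fintype.card_fin]

theorem stmt9 {C : Type*} [Fintype C] (hC : 2 ≤ Fintype.card C) {n : ℕ}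
    (O : Fin n → C → C → Prop) (hO : ∀ i, IsStrictTotalOrder C (O i))
    (si sM : C → ℕ)
    (hsi : ∀ c, IsLeast {k : ℕ | ∃ O' : Fin k → C → C → Prop,
      (∀ j, IsStrictTotalOrder C (O' j)) ∧
      IsCondorcetWinner (Sum.elim O O' : Fin n ⊕ Fin k → C → C → Prop) c} (si c))
    (hsM : ∀ c, IsLeast {t : ℕ | ∃ c' : C, c' ≠ c ∧ countPref O c c' = t} (sM c)) :
    ∀ c : C, (∀ c', sM c' ≤ sM c) ↔ (∀ c', si c ≤ si c') := by
  obtain ⟨e, he⟩ : ∃ e : C → ℕ, Function.Injective e :=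
    ⟨fun x => (Fintype.equivFin C x : ℕ), fun a b h =>
      (Fintype.equivFin C).injective (Fin.val_injective h)⟩
  -- sM c ≤ countPref O c b for b ≠ c
  have hle : ∀ c b : C, b ≠ c → sM c ≤ countPref O c b := fun c b hb =>
    (hsM c).2 ⟨b, hb, rfl⟩
  -- key formula
  have key : ∀ c : C, si c = n + 1 - 2 * sM c := by
    intro c
    refine ((hsi c).unique ⟨?_, ?_⟩)
    · -- membership
      refine ⟨fun _ => topOrder e c, fun _ => topOrder_sto e he c, ?_⟩
      intro b hbc
      rw [countPref_sum, countPref_topOrder e c b hbc]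
      have h1 := hle c b hbc
      simp only [Fintype.card_sum, Fintype.card_fin]
      omega
    · -- lower bound
      rintro k ⟨O', hO', hcw⟩
      obtain ⟨c₀, hc₀, hcp⟩ := (hsM c).1
      have := hcw c₀ hc₀
      rw [countPref_sum] at this
      have h2 : countPref O' c c₀ ≤ k := by
        have := countPref_le_card O' c c₀
        simpa using this
      simp only [Fintype.card_sum, Fintype.card_fin] at this
      omega
  -- pairwise bound
  have hsum : ∀ c c' : C, c ≠ c' → sM c + sM c' ≤ n := by
    intro c c' hne
    have h1 := hle c c' (Ne.symm hne)
    have h2 := hle c' c hne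
    have h3 := countPref_add_swap O hO (a := c) (b := c') hne
    rw [Fintype.card_fin] at h3
    omega
  intro c
  constructor
  · intro h c'
    rw [key, key]
    have := h c'
    omega
  · intro h c'
    by_cases hcc : c' = c
    · exact le_of_eq (congrArg sM hcc)
    have h1 := h c'
    rw [key, key] at h1
    have h2 := hsum c c' (Ne.symm hcc)
    omega
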